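/- arXiv:1807.07233 — 2 statements merged into one kernel-verified Lean document; each statement's English description precedes it below -/
import Mathlib

section
/- For every natural number s there exists a constant D = D(s) with the following property: for every prime p and every finite group G of sectional p-rank at most s, and for every chief series 1 = G_0 ≤ G_1 ≤ ... ≤ G_n = G of G (each G_i normal in G, and for each i there is no subgroup normal in G strictly between G_i and G_{i+1}), the number of indices i such that the chief factor G_{i+1}/G_i is a p-group and is complemented in G/G_i (i.e., there exists a subgroup C of G with G_i ≤ C, C ∩ G_{i+1} = G_i, and C·G_{i+1} = G) is at most D. The bound D depends only on s, not on p. -/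
/-- A finite group `G` has sectional `p`-rank at most `r`: for all subgroups `K ⊴ L ≤ G`
such that `L/K` is an elementary abelian `p`-group, one has `|L/K| ≤ p^r`. -/
def SectionalRankLe (p : ℕ) (G : Type) [Group G] (r : ℕ) : Prop :=
  ∀ (L : Subgroup G) (K : Subgroup L) (_ : K.Normal),
    (∀ x : L ⧸ K, x ^ p = 1) → (∀ x y : L ⧸ K, x * y = y * x) →
      Nat.card (L ⧸ K) ≤ p ^ r

open Subgroup

/-- `G` has an elementary abelian `p`-section of cardinality `c`. -/
def EAS (p : ℕ) (G : Type*) [Group G] (c : ℕ) : Prop :=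
  ∃ (L : Subgroup G) (K : Subgroup L) (_ : K.Normal),
    (∀ x : L ⧸ K, x ^ p = 1) ∧ (∀ x y : L ⧸ K, x * y = y * x) ∧ Nat.card (L ⧸ K) = c

lemma EAS_one (p : ℕ) (G : Type*) [Group G] : EAS p G 1 := by
  haveI h1 : Subsingleton ↥(⊥ : Subgroup G) := by
    constructor
    intro a b
    apply Subtype.ext
    rw [Subgroup.mem_bot.mp a.2, Subgroup.mem_bot.mp b.2]
  haveI h2 : Subsingleton (↥(⊥ : Subgroup G) ⧸ (⊥ : Subgroup ↥(⊥ : Subgroup G))) := by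
    constructor
    intro a b
    induction a using QuotientGroup.induction_on with | H x =>
    induction b using QuotientGroup.induction_on with | H y =>
    rw [Subsingleton.elim x y]
  refine ⟨⊥, ⊥, inferInstance, ?_, ?_, ?_⟩
  · intro x; apply Subsingleton.elim
  · intro x y; apply Subsingleton.elim
  · exact Nat.card_eq_one_iff_unique.mpr ⟨inferInstance, inferInstance⟩

lemma EAS_le {p : ℕ} {G : Type} [Group G] {s c : ℕ}
    (hs : SectionalRankLe p G s) (h : EAS p G c) : c ≤ p ^ s := by
  obtain ⟨L, K, hn, h1, h2, hc⟩ := h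
  exact hc ▸ hs L K hn h1 h2

lemma EAS_pull {H Q : Type*} [Group H] [Group Q] (f : H →* Q) (hf : Function.Surjective f)
    {p c : ℕ} (h : EAS p Q c) :
    ∃ (L : Subgroup H) (K : Subgroup L) (_ : K.Normal),
      (∀ x : L ⧸ K, x ^ p = 1) ∧ (∀ x y : L ⧸ K, x * y = y * x) ∧
      Nat.card (L ⧸ K) = c ∧ f.ker ≤ L ∧ f.ker.subgroupOf L ≤ K := by
  obtain ⟨Lb, Kb, hKbn, hexp, hcomm, hcard⟩ := h
  set L : Subgroup H := Lb.comap f with hL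
  let g : ↥L →* ↥Lb := (f.comp L.subtype).codRestrict Lb (fun x => x.2)
  have hgval : ∀ x : ↥L, (g x : Q) = f ↑x := fun x => rfl
  have hg : Function.Surjective g := by
    rintro ⟨y, hy⟩
    obtain ⟨x, rfl⟩ := hf y
    exact ⟨⟨x, hy⟩, rfl⟩
  set K : Subgroup ↥L := Kb.comap g with hK
  haveI hKn : K.Normal := hKbn.comap g
  let Φ : (↥L ⧸ K) →* (↥Lb ⧸ Kb) := QuotientGroup.map K Kb g le_rfl
  have hΦmk : ∀ a : ↥L, Φ (QuotientGroup.mk a) = QuotientGroup.mk (g a) := fun a => rfl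
  have hΦinj : Function.Injective Φ := by
    intro x y
    induction x using QuotientGroup.induction_on with | H a =>
    induction y using QuotientGroup.induction_on with | H b =>
    intro hab
    rw [hΦmk, hΦmk, QuotientGroup.eq] at hab
    rw [QuotientGroup.eq]
    simpa [hK, Subgroup.mem_comap] using hab
  have hΦsurj : Function.Surjective Φ := by
    intro y
    induction y using QuotientGroup.induction_on with | H b =>
    obtain ⟨a, rfl⟩ := hg b
    exact ⟨QuotientGroup.mk a, rfl⟩
  refine ⟨L, K, hKn, ?_, ?_, ?_, ?_, ?_⟩
  · intro x
    apply hΦinj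
    rw [map_pow, map_one, hexp]
  · intro x y
    apply hΦinj
    rw [map_mul, map_mul, hcomm]
  · rw [← hcard]
    exact Nat.card_eq_of_bijective Φ ⟨hΦinj, hΦsurj⟩
  · intro x hx
    simp only [hL, Subgroup.mem_comap]
    rw [MonoidHom.mem_ker] at hx
    rw [hx]; exact Lb.one_mem
  · intro x hx
    rw [Subgroup.mem_subgroupOf] at hx
    rw [MonoidHom.mem_ker] at hx
    have : g x = 1 := by
      apply Subtype.ext
      rw [hgval]; exact hx
    simp only [hK, Subgroup.mem_comap, this]
    exact Kb.one_mem

lemma EAS_of_quotient {G : Type*} [Group G] (N : Subgroup G) [N.Normal] {p c : ℕ}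
    (h : EAS p (G ⧸ N) c) : EAS p G c := by
  obtain ⟨L, K, hn, h1, h2, hc, -, -⟩ :=
    EAS_pull (QuotientGroup.mk' N) (QuotientGroup.mk'_surjective N) h
  exact ⟨L, K, hn, h1, h2, hc⟩

lemma EAS_of_subgroup {G : Type*} [Group G] {T : Subgroup G} {p c : ℕ}
    (h : EAS p ↥T c) : EAS p G c := by
  obtain ⟨L2, K2, hn, hexp, hcomm, hcard⟩ := h
  let e : ↥L2 ≃* ↥(L2.map T.subtype) := L2.equivMapOfInjective T.subtype T.subtype_injective
  haveI hn' : (K2.map e.toMonoidHom).Normal := hn.map e.toMonoidHom e.surjective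
  have E := QuotientGroup.congr K2 (K2.map e.toMonoidHom) e rfl
  refine ⟨L2.map T.subtype, K2.map e.toMonoidHom, hn', ?_, ?_, ?_⟩
  · intro x
    obtain ⟨y, rfl⟩ := E.surjective x
    rw [← map_pow, hexp, map_one]
  · intro x y
    obtain ⟨a, rfl⟩ := E.surjective x
    obtain ⟨b, rfl⟩ := E.surjective y
    rw [← map_mul, ← map_mul, hcomm]
  · rw [← hcard]
    exact (Nat.card_congr E.toEquiv).symm

lemma exists_mul_of_mem_sup {G : Type*} [Group G] {A B : Subgroup G}
    (hcomm : ∀ a ∈ A, ∀ b ∈ B, Commute a b) {g : G} (hg : g ∈ A ⊔ B) :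
    ∃ a ∈ A, ∃ b ∈ B, g = a * b := by
  let S : Subgroup G :=
    { carrier := {x | ∃ a ∈ A, ∃ b ∈ B, x = a * b}
      one_mem' := ⟨1, A.one_mem, 1, B.one_mem, (one_mul 1).symm⟩
      mul_mem' := by
        rintro x y ⟨a, ha, b, hb, rfl⟩ ⟨a', ha', b', hb', rfl⟩
        refine ⟨a * a', A.mul_mem ha ha', b * b', B.mul_mem hb hb', ?_⟩
        have h := (hcomm a' ha' b hb).symm.eq
        rw [mul_assoc, ← mul_assoc b a' b', h, mul_assoc, ← mul_assoc]
      inv_mem' := by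
        rintro x ⟨a, ha, b, hb, rfl⟩
        refine ⟨a⁻¹, A.inv_mem ha, b⁻¹, B.inv_mem hb, ?_⟩
        rw [mul_inv_rev, (hcomm a ha b hb).inv_inv.symm.eq] }
  have hA : A ≤ S := fun a ha => ⟨a, ha, 1, B.one_mem, (mul_one a).symm⟩
  have hB : B ≤ S := fun b hb => ⟨1, A.one_mem, b, hb, (one_mul b).symm⟩
  exact sup_le hA hB hg

lemma card_sup_of_commute {G : Type*} [Group G] {A B : Subgroup G}
    (hcomm : ∀ a ∈ A, ∀ b ∈ B, Commute a b) (hdisj : A ⊓ B = ⊥) :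
    Nat.card ↥(A ⊔ B) = Nat.card A * Nat.card B := by
  have hbij : Function.Bijective (fun x : ↥A × ↥B =>
      (⟨(x.1 : G) * (x.2 : G), Subgroup.mul_mem_sup x.1.2 x.2.2⟩ : ↥(A ⊔ B))) := by
    constructor
    · rintro ⟨⟨a, ha⟩, ⟨b, hb⟩⟩ ⟨⟨a', ha'⟩, ⟨b', hb'⟩⟩ h
      have h' : a * b = a' * b' := congrArg Subtype.val h
      have key : a'⁻¹ * a ∈ A ⊓ B := by
        constructor
        · exact A.mul_mem (A.inv_mem ha') ha
        · have heq : a'⁻¹ * a = b' * b⁻¹ := by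
            calc a'⁻¹ * a = a'⁻¹ * (a * b) * b⁻¹ := by group
            _ = a'⁻¹ * (a' * b') * b⁻¹ := by rw [h']
            _ = b' * b⁻¹ := by group
          rw [heq]
          exact B.mul_mem hb' (B.inv_mem hb)
      rw [hdisj, Subgroup.mem_bot, inv_mul_eq_one] at key
      subst key
      have hb2 : b = b' := by
        have := mul_left_cancel h'
        exact this
      simp [hb2]
    · rintro ⟨x, hx⟩
      obtain ⟨a, ha, b, hb, rfl⟩ := exists_mul_of_mem_sup hcomm hx
      exact ⟨(⟨a, ha⟩, ⟨b, hb⟩), rfl⟩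
  rw [← Nat.card_prod]
  exact (Nat.card_eq_of_bijective _ hbij).symm

section dev
variable {H : Type*} [Group H] [Finite H]

set_option maxHeartbeats 1000000 in
lemma key_core {p : ℕ} (hp : p.Prime)
    (N : Subgroup H) (hNn : N.Normal) (hNp : IsPGroup p ↥N) (hNbot : N ≠ ⊥)
    (C : Subgroup H) (hCN : C ⊓ N = ⊥) (hCNt : C ⊔ N = ⊤)
    (K : Subgroup H) (hKn : K.Normal) (hNK : N ≤ K)
    (hexp : ∀ x : H ⧸ K, x ^ p = 1) (hcomm : ∀ x y : H ⧸ K, x * y = y * x) :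
    ∃ (L : Subgroup H) (K' : Subgroup L) (_ : K'.Normal),
      (∀ x : L ⧸ K', x ^ p = 1) ∧ (∀ x y : L ⧸ K', x * y = y * x) ∧
      Nat.card (L ⧸ K') = p * Nat.card (H ⧸ K) := by
  haveI : Fact p.Prime := ⟨hp⟩
  haveI := hNn
  haveI := hKn
  let πQ : H →* H ⧸ K := QuotientGroup.mk' K
  have hπker : ∀ x : H, πQ x = 1 ↔ x ∈ K := fun x => QuotientGroup.eq_one_iff x
  have hQp : IsPGroup p (H ⧸ K) := fun x => ⟨1, by rw [pow_one]; exact hexp x⟩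
  -- covering by C
  have hcover : ∀ x : H, ∃ cc ∈ C, πQ cc = πQ x := by
    intro x
    have hx : x ∈ ((C ⊔ N : Subgroup H) : Set H) := by rw [hCNt]; trivial
    rw [Subgroup.mul_normal C N] at hx
    obtain ⟨a, ha, b, hb, rfl⟩ := hx
    refine ⟨a, ha, ?_⟩
    rw [map_mul, (hπker b).mpr (hNK hb), mul_one]
  let θ : ↥C →* H ⧸ K := πQ.comp C.subtype
  have hθ : Function.Surjective θ := by
    intro y
    obtain ⟨x, rfl⟩ := QuotientGroup.mk'_surjective K y
    obtain ⟨cc, hcc, h⟩ := hcover x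
    exact ⟨⟨cc, hcc⟩, h⟩
  obtain ⟨P⟩ : Nonempty (Sylow p ↥C) := inferInstance
  -- image of the Sylow subgroup covers the quotient
  have hJ : Subgroup.map θ (P : Subgroup ↥C) = ⊤ := by
    have h1 : (Subgroup.map θ (P : Subgroup ↥C)).index ∣ (P : Subgroup ↥C).index :=
      Subgroup.index_map_dvd _ hθ
    have h2 : ¬ p ∣ (P : Subgroup ↥C).index := P.not_dvd_index
    have h3 : (Subgroup.map θ (P : Subgroup ↥C)).index ∣ Nat.card (H ⧸ K) :=
      Subgroup.index_dvd_card _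
    obtain ⟨k, hk⟩ := (IsPGroup.iff_card).mp hQp
    rw [hk] at h3
    obtain ⟨j, hj, hjeq⟩ := (Nat.dvd_prime_pow hp).mp h3
    rcases Nat.eq_zero_or_pos j with hj0 | hj0
    · rw [← Subgroup.index_eq_one, hjeq, hj0, pow_zero]
    · exact absurd (dvd_trans (hjeq ▸ dvd_pow_self p hj0.ne') h1) h2
  set Pg : Subgroup H := Subgroup.map C.subtype (P : Subgroup ↥C) with hPgdef
  have hPgC : Pg ≤ C := Subgroup.map_subtype_le _
  have hPgp : IsPGroup p ↥Pg := P.2.map _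
  have hPgcover : ∀ y : H ⧸ K, ∃ b ∈ Pg, πQ b = y := by
    intro y
    have hy : y ∈ Subgroup.map θ (P : Subgroup ↥C) := by rw [hJ]; trivial
    obtain ⟨x, hx, rfl⟩ := hy
    exact ⟨↑x, ⟨x, hx, rfl⟩, rfl⟩
  -- find a central element z of order p in N, commuting with Pg
  letI actInst : MulAction ↥Pg ↥N := MulAction.compHom ↥N ((MulAut.conjNormal : H →* MulAut ↥N).comp Pg.subtype)
  have hsmul : ∀ (g : ↥Pg) (n : ↥N), ((g • n : ↥N) : H) = ↑g * ↑n * (↑g)⁻¹ := by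
    intro g n
    rfl
  have hmod := hPgp.card_modEq_card_fixedPoints ↥N
  have hNcard : p ∣ Nat.card ↥N := by
    obtain ⟨k, hk⟩ := IsPGroup.iff_card.mp hNp
    rcases Nat.eq_zero_or_pos k with h0 | hpos
    · exfalso
      rw [h0, pow_zero] at hk
      have : Nontrivial ↥N := (Subgroup.nontrivial_iff_ne_bot N).mpr hNbot
      exact (Finite.one_lt_card (α := ↥N)).ne' hk
    · rw [hk]; exact dvd_pow_self p hpos.ne'
  have hfpdvd : p ∣ Nat.card (MulAction.fixedPoints ↥Pg ↥N) :=
    (Nat.modEq_zero_iff_dvd.mp ((hmod.symm.trans (Nat.modEq_zero_iff_dvd.mpr hNcard))))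
  have hone : (1 : ↥N) ∈ MulAction.fixedPoints ↥Pg ↥N := by
    intro g
    apply Subtype.ext
    rw [hsmul]
    simp
  have hfp2 : 1 < Nat.card (MulAction.fixedPoints ↥Pg ↥N) := by
    have hpos : 0 < Nat.card (MulAction.fixedPoints ↥Pg ↥N) :=
      Nat.card_pos_iff.mpr ⟨⟨⟨1, hone⟩⟩, Set.toFinite _⟩
    exact hp.one_lt.trans_le (Nat.le_of_dvd hpos hfpdvd)
  obtain ⟨z', hz'ne⟩ := by
    haveI hnt : Nontrivial (MulAction.fixedPoints ↥Pg ↥N) :=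
      Finite.one_lt_card_iff_nontrivial.mp hfp2
    exact exists_ne (⟨1, hone⟩ : MulAction.fixedPoints ↥Pg ↥N)
  set z₀ : ↥N := ↑z' with hz₀def
  have hz₀fp : ∀ g : ↥Pg, g • z₀ = z₀ := z'.2
  have hz₀ne : z₀ ≠ 1 := by
    intro h
    exact hz'ne (Subtype.ext h)
  have hz₀c : ∀ b ∈ Pg, Commute b (↑z₀ : H) := by
    intro b hb
    have h1 := congrArg (Subtype.val) (hz₀fp ⟨b, hb⟩)
    rw [hsmul] at h1
    have : b * ↑z₀ = ↑z₀ * b := by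
      calc b * ↑z₀ = (b * ↑z₀ * b⁻¹) * b := by group
      _ = ↑z₀ * b := by rw [h1]
    exact this
  -- an element of order exactly p
  obtain ⟨e', he'⟩ := hNp z₀
  obtain ⟨e, he, heq⟩ := (Nat.dvd_prime_pow hp).mp (orderOf_dvd_of_pow_eq_one he')
  have hepos : 0 < e := by
    rcases Nat.eq_zero_or_pos e with h0 | h
    · exfalso
      rw [h0, pow_zero, orderOf_eq_one_iff] at heq
      exact hz₀ne heq
    · exact h
  set z₁ : ↥N := z₀ ^ (p ^ (e - 1)) with hz₁def
  have hz₁ne : z₁ ≠ 1 := by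
    intro h
    have hdvd := orderOf_dvd_of_pow_eq_one h
    rw [heq] at hdvd
    have := (Nat.pow_dvd_pow_iff_le_right hp.one_lt).mp hdvd
    omega
  have hz₁p : z₁ ^ p = 1 := by
    have harith : p ^ (e - 1) * p = p ^ e := by
      rw [← pow_succ]
      congr 1
      omega
    rw [hz₁def, ← pow_mul, harith, ← heq, pow_orderOf_eq_one]
  set z : H := ↑z₁ with hzdef
  have hzN : z ∈ N := z₁.2
  have hzne : z ≠ 1 := fun h => hz₁ne (Subtype.ext h)
  have hzp : z ^ p = 1 := by
    rw [hzdef, ← Subgroup.coe_pow, hz₁p, Subgroup.coe_one]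
  have hzc : ∀ b ∈ Pg, Commute z b := by
    intro b hb
    have : (z : H) = (↑z₀ : H) ^ (p ^ (e - 1)) := by
      rw [hzdef, hz₁def, Subgroup.coe_pow]
    rw [this]
    exact ((hz₀c b hb).pow_right _).symm
  set Zg : Subgroup H := Subgroup.zpowers z with hZgdef
  have hZgN : Zg ≤ N := (Subgroup.zpowers_le).mpr hzN
  have hZgK : Zg ≤ K := hZgN.trans hNK
  have hcardZg : Nat.card ↥Zg = p := by
    rw [hZgdef, Nat.card_zpowers]
    exact orderOf_eq_prime hzp hzne
  have hZgcomm : ∀ a ∈ Zg, ∀ a' ∈ Zg, Commute a a' := by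
    rintro a ⟨i, rfl⟩ a' ⟨j, rfl⟩
    exact (Commute.refl z).zpow_zpow i j
  have hZPcomm : ∀ a ∈ Zg, ∀ b ∈ Pg, Commute a b := by
    rintro a ⟨i, rfl⟩ b hb
    exact ((hzc b hb).zpow_left i)
  set L₁ : Subgroup H := Zg ⊔ Pg with hL₁def
  have hZgL₁ : Zg ≤ L₁ := le_sup_left
  have hPgL₁ : Pg ≤ L₁ := le_sup_right
  have hdecomp : ∀ {g : H}, g ∈ L₁ → ∃ a ∈ Zg, ∃ b ∈ Pg, g = a * b :=
    fun hg => exists_mul_of_mem_sup hZPcomm hg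
  have hzcentral : ∀ a ∈ Zg, ∀ w ∈ L₁, Commute a w := by
    intro a ha w hw
    obtain ⟨α, hα, β, hβ, rfl⟩ := hdecomp hw
    exact (hZgcomm a ha α hα).mul_right (hZPcomm a ha β hβ)
  set K₁ : Subgroup H := Pg ⊓ K with hK₁def
  have hK₁Pg : K₁ ≤ Pg := inf_le_left
  have hK₁K : K₁ ≤ K := inf_le_right
  have hK₁L₁ : K₁ ≤ L₁ := hK₁Pg.trans hPgL₁
  have hK₁conj : ∀ g ∈ L₁, ∀ x ∈ K₁, g * x * g⁻¹ ∈ K₁ := by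
    intro g hg x hx
    obtain ⟨a, ha, b, hb, rfl⟩ := hdecomp hg
    have hw : b * x * b⁻¹ ∈ K₁ :=
      ⟨Pg.mul_mem (Pg.mul_mem hb hx.1) (Pg.inv_mem hb), hKn.conj_mem x hx.2 b⟩
    have hcab : Commute a (b * x * b⁻¹) := hZPcomm a ha _ hw.1
    have hre : (a * b) * x * (a * b)⁻¹ = a * (b * x * b⁻¹) * a⁻¹ := by group
    rw [hre, hcab.eq, mul_inv_cancel_right]
    exact hw
  set K₁' : Subgroup ↥L₁ := K₁.subgroupOf L₁ with hK₁'def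
  haveI hK₁'n : K₁'.Normal := by
    constructor
    intro n hn g
    rw [hK₁'def, Subgroup.mem_subgroupOf] at hn ⊢
    push_cast
    exact hK₁conj ↑g g.2 ↑n hn
  -- counting
  let Θ : ↥L₁ →* H ⧸ K := πQ.comp L₁.subtype
  have hΘval : ∀ x : ↥L₁, Θ x = πQ ↑x := fun x => rfl
  have hΘsurj : Function.Surjective Θ := by
    intro y
    obtain ⟨b, hb, hby⟩ := hPgcover y
    exact ⟨⟨b, hPgL₁ hb⟩, hby⟩
  have hΘker : Θ.ker = K.subgroupOf L₁ := by
    ext x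
    rw [MonoidHom.mem_ker, Subgroup.mem_subgroupOf, hΘval, hπker]
  have cardA : Nat.card ↥L₁ = Nat.card (H ⧸ K) * Nat.card ↥(K.subgroupOf L₁) := by
    have h1 := Subgroup.card_eq_card_quotient_mul_card_subgroup Θ.ker
    rw [Nat.card_congr (QuotientGroup.quotientKerEquivOfSurjective Θ hΘsurj).toEquiv] at h1
    rw [hΘker] at h1
    exact h1
  have hKL₁ : K.subgroupOf L₁ = (Zg ⊔ K₁).subgroupOf L₁ := by
    ext x
    rw [Subgroup.mem_subgroupOf, Subgroup.mem_subgroupOf]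
    constructor
    · intro hxK
      obtain ⟨a, ha, b, hb, hab⟩ := hdecomp x.2
      have hbK : b ∈ K := by
        have : b = a⁻¹ * ↑x := by rw [hab]; group
        rw [this]
        exact K.mul_mem (K.inv_mem (hZgK ha)) hxK
      rw [hab]
      exact Subgroup.mul_mem_sup ha ⟨hb, hbK⟩
    · intro hx
      exact (sup_le hZgK hK₁K) hx
  have hZgK₁disj : Zg ⊓ K₁ = ⊥ := by
    rw [eq_bot_iff, ← hCN]
    rintro x ⟨hx1, hx2⟩
    exact ⟨hPgC (hK₁Pg hx2), hZgN hx1⟩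
  have cardker : Nat.card ↥(K.subgroupOf L₁) = p * Nat.card ↥K₁ := by
    rw [hKL₁]
    rw [Nat.card_congr (Subgroup.subgroupOfEquivOfLe (sup_le hZgL₁ hK₁L₁)).toEquiv]
    rw [card_sup_of_commute (fun a ha b hb => hZPcomm a ha b (hK₁Pg hb)) hZgK₁disj, hcardZg]
  have cardB : Nat.card ↥L₁ = Nat.card (↥L₁ ⧸ K₁') * Nat.card ↥K₁ := by
    have h1 := Subgroup.card_eq_card_quotient_mul_card_subgroup K₁'
    rw [Nat.card_congr (Subgroup.subgroupOfEquivOfLe hK₁L₁).toEquiv] at h1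
    exact h1
  have hK₁pos : 0 < Nat.card ↥K₁ := Nat.card_pos
  have cardfinal : Nat.card (↥L₁ ⧸ K₁') = p * Nat.card (H ⧸ K) := by
    have h1 : Nat.card (↥L₁ ⧸ K₁') * Nat.card ↥K₁
        = (p * Nat.card (H ⧸ K)) * Nat.card ↥K₁ := by
      rw [← cardB, cardA, cardker]
      ring
    exact Nat.eq_of_mul_eq_mul_right hK₁pos h1
  -- the section is elementary abelian
  have hbpow : ∀ b ∈ Pg, b ^ p ∈ K₁ := by
    intro b hb
    refine ⟨Pg.pow_mem hb p, (hπker _).mp ?_⟩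
    rw [map_pow]
    exact hexp (πQ b)
  have hbcommK : ∀ b ∈ Pg, ∀ b' ∈ Pg, (b * b')⁻¹ * (b' * b) ∈ K₁ := by
    intro b hb b' hb'
    constructor
    · exact Pg.mul_mem (Pg.inv_mem (Pg.mul_mem hb hb')) (Pg.mul_mem hb' hb)
    · refine (hπker _).mp ?_
      rw [map_mul, map_inv, map_mul, map_mul]
      rw [hcomm (πQ b) (πQ b')]
      group
  have hexp' : ∀ x : ↥L₁ ⧸ K₁', x ^ p = 1 := by
    intro x
    induction x using QuotientGroup.induction_on with | H g =>
    rw [← QuotientGroup.mk_pow, QuotientGroup.eq_one_iff]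
    rw [Subgroup.mem_subgroupOf]
    obtain ⟨a, ha, b, hb, hab⟩ := hdecomp g.2
    have hcoe : ((g ^ p : ↥L₁) : H) = (a * b) ^ p := by
      rw [Subgroup.coe_pow, hab]
    rw [hcoe, (hZPcomm a ha b hb).mul_pow]
    obtain ⟨i, rfl⟩ := ha
    have hzpow : (z ^ i) ^ p = 1 := by
      rw [← zpow_natCast (z ^ i) p, ← zpow_mul, mul_comm, zpow_mul, zpow_natCast, hzp,
        one_zpow]
    rw [hzpow, one_mul]
    exact hbpow b hb
  have hcomm' : ∀ x y : ↥L₁ ⧸ K₁', x * y = y * x := by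
    intro x y
    induction x using QuotientGroup.induction_on with | H g =>
    induction y using QuotientGroup.induction_on with | H h =>
    rw [← QuotientGroup.mk_mul, ← QuotientGroup.mk_mul, QuotientGroup.eq]
    rw [Subgroup.mem_subgroupOf]
    obtain ⟨a, ha, b, hb, hab⟩ := hdecomp g.2
    obtain ⟨a', ha', b', hb', hab'⟩ := hdecomp h.2
    have hcoe : (((g * h)⁻¹ * (h * g) : ↥L₁) : H)
        = ((↑g : H) * ↑h)⁻¹ * ((↑h : H) * ↑g) := by
      push_cast
      rfl
    have h1 : (↑g : H) * ↑h = (a * a') * (b * b') := by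
      rw [hab, hab']
      calc a * b * (a' * b') = a * (b * a') * b' := by group
      _ = a * (a' * b) * b' := by rw [← (hZPcomm a' ha' b hb).eq]
      _ = a * a' * (b * b') := by group
    have h2 : (↑h : H) * ↑g = (a * a') * (b' * b) := by
      rw [hab, hab']
      calc a' * b' * (a * b) = a' * (b' * a) * b := by group
      _ = a' * (a * b') * b := by rw [← (hZPcomm a ha b' hb').eq]
      _ = a' * a * (b' * b) := by group
      _ = a * a' * (b' * b) := by rw [(hZgcomm a ha a' ha').eq]
    rw [hcoe, h1, h2]
    have h3 : ((a * a') * (b * b'))⁻¹ * ((a * a') * (b' * b)) = (b * b')⁻¹ * (b' * b) := by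
      group
    rw [h3]
    exact hbcommK b hb b' hb'
  exact ⟨L₁, K₁', hK₁'n, hexp', hcomm', cardfinal⟩
end dev

lemma key {G : Type*} [Group G] [Finite G] {p : ℕ} (hp : p.Prime)
    {N : Subgroup G} (hNn : N.Normal) (hNp : IsPGroup p ↥N) (hNbot : N ≠ ⊥)
    {C : Subgroup G} (hCN : C ⊓ N = ⊥) (hCNt : C ⊔ N = ⊤) {c : ℕ}
    (h : EAS p (G ⧸ N) c) : EAS p G (p * c) := by
  haveI := hNn
  obtain ⟨L, K, hKn, hexp, hcomm, hcard, hkerL, hkerK⟩ :=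
    EAS_pull (QuotientGroup.mk' N) (QuotientGroup.mk'_surjective N) h
  rw [QuotientGroup.ker_mk'] at hkerL hkerK
  haveI hN'n : (N.subgroupOf L).Normal := hNn.subgroupOf L
  have hN'p : IsPGroup p ↥(N.subgroupOf L) := by
    intro x
    obtain ⟨k, hk⟩ := hNp ⟨((x : ↥L) : G), x.2⟩
    refine ⟨k, ?_⟩
    apply Subtype.ext; apply Subtype.ext
    have h2 := congrArg (Subtype.val) hk
    push_cast at h2 ⊢
    exact h2
  have hN'bot : N.subgroupOf L ≠ ⊥ := by
    obtain ⟨n, hnN, hn1⟩ : ∃ n ∈ N, n ≠ (1 : G) := by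
      by_contra hcon
      push_neg at hcon
      exact hNbot (eq_bot_iff.mpr (fun x hx => Subgroup.mem_bot.mpr (hcon x hx)))
    intro hbot
    have hmem : (⟨n, hkerL hnN⟩ : ↥L) ∈ N.subgroupOf L := by
      rw [Subgroup.mem_subgroupOf]; exact hnN
    rw [hbot, Subgroup.mem_bot] at hmem
    exact hn1 (congrArg Subtype.val hmem)
  have hC'N' : (C.subgroupOf L) ⊓ (N.subgroupOf L) = ⊥ := by
    ext x
    simp only [Subgroup.mem_inf, Subgroup.mem_subgroupOf, Subgroup.mem_bot]
    constructor
    · rintro ⟨h1, h2⟩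
      have hx : (↑x : G) ∈ C ⊓ N := ⟨h1, h2⟩
      rw [hCN, Subgroup.mem_bot] at hx
      exact Subtype.ext hx
    · rintro rfl
      exact ⟨C.one_mem, N.one_mem⟩
  have hC'N't : C.subgroupOf L ⊔ N.subgroupOf L = ⊤ := by
    rw [eq_top_iff]
    rintro x -
    have hx : (↑x : G) ∈ ((C ⊔ N : Subgroup G) : Set G) := by rw [hCNt]; trivial
    rw [Subgroup.mul_normal C N] at hx
    obtain ⟨a, ha, b, hb, hab⟩ := hx
    have hbL : b ∈ L := hkerL hb
    have haL : a ∈ L := by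
      have h2 : a = ↑x * b⁻¹ := by rw [← hab]; group
      rw [h2]; exact L.mul_mem x.2 (L.inv_mem hbL)
    have h3 : x = (⟨a, haL⟩ : ↥L) * ⟨b, hbL⟩ := by
      apply Subtype.ext; push_cast; exact hab.symm
    rw [h3]
    exact Subgroup.mul_mem_sup (by rwa [Subgroup.mem_subgroupOf])
      (by rwa [Subgroup.mem_subgroupOf])
  obtain ⟨L₂, K₂, hn₂, he₂, hc₂, hcard₂⟩ := key_core hp (N.subgroupOf L) hN'n hN'p hN'bot
    (C.subgroupOf L) hC'N' hC'N't K hKn hkerK hexp hcomm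
  rw [hcard] at hcard₂
  exact EAS_of_subgroup ⟨L₂, K₂, hn₂, he₂, hc₂, hcard₂⟩

lemma rank_quotient {p s : ℕ} {G : Type} [Group G] (N : Subgroup G) [N.Normal]
    (hs : SectionalRankLe p G s) : SectionalRankLe p (G ⧸ N) s := by
  intro L K hn h1 h2
  exact EAS_le hs (EAS_of_quotient N ⟨L, K, hn, h1, h2, rfl⟩)

lemma rank_drop {p : ℕ} (hp : p.Prime) {G : Type} [Group G] [Finite G] {s : ℕ}
    (hs : SectionalRankLe p G s) {N C : Subgroup G} (hNn : N.Normal)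
    (hNp : IsPGroup p ↥N) (hNbot : N ≠ ⊥) (hCN : C ⊓ N = ⊥) (hCNt : C ⊔ N = ⊤) :
    1 ≤ s ∧ SectionalRankLe p (G ⧸ N) (s - 1) := by
  have hps : ∀ c, EAS p (G ⧸ N) c → p * c ≤ p ^ s :=
    fun c hc => EAS_le hs (key hp hNn hNp hNbot hCN hCNt hc)
  have hs1 : 1 ≤ s := by
    have h1 := hps 1 (EAS_one p _)
    by_contra hcon
    push_neg at hcon
    have : s = 0 := by omega
    rw [this, pow_zero, mul_one] at h1
    have := hp.two_le
    omega
  refine ⟨hs1, ?_⟩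
  intro L K hn h1 h2
  have h3 := hps _ ⟨L, K, hn, h1, h2, rfl⟩
  have hpow : p ^ s = p * p ^ (s - 1) := by
    rw [← pow_succ']
    congr 1
    omega
  rw [hpow] at h3
  exact Nat.le_of_mul_le_mul_left h3 hp.pos

lemma relindex_card_eq {G : Type*} [Group G] [Finite G] {X Y : Subgroup G} (h : X ≤ Y) :
    Nat.card ↥X * X.relIndex Y = Nat.card ↥Y := by
  have h1 : Nat.card ↥(X.subgroupOf Y) * (X.subgroupOf Y).index = Nat.card ↥Y :=
    Subgroup.card_mul_index _
  rw [Nat.card_congr (Subgroup.subgroupOfEquivOfLe h).toEquiv] at h1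
  exact h1

lemma card_map_mk' {G : Type*} [Group G] [Finite G] (N : Subgroup G) [N.Normal]
    {X : Subgroup G} (h : N ≤ X) :
    Nat.card ↥(X.map (QuotientGroup.mk' N)) * Nat.card ↥N = Nat.card ↥X := by
  let ψ := (QuotientGroup.mk' N).comp X.subtype
  have hrange : ψ.range = X.map (QuotientGroup.mk' N) := by
    rw [MonoidHom.range_comp, Subgroup.range_subtype]
  have hker : ψ.ker = N.subgroupOf X := by
    rw [← MonoidHom.comap_ker, QuotientGroup.ker_mk']
    rfl
  have h1 : Nat.card ↥X = Nat.card (↥X ⧸ ψ.ker) * Nat.card ψ.ker :=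
    Subgroup.card_eq_card_quotient_mul_card_subgroup _
  rw [Nat.card_congr (QuotientGroup.quotientKerEquivRange ψ).toEquiv, hrange, hker,
    Nat.card_congr (Subgroup.subgroupOfEquivOfLe h).toEquiv] at h1
  exact h1.symm

lemma relindex_map_mk' {G : Type*} [Group G] [Finite G] (N : Subgroup G) [N.Normal]
    {A B : Subgroup G} (hNA : N ≤ A) (hAB : A ≤ B) :
    (A.map (QuotientGroup.mk' N)).relIndex (B.map (QuotientGroup.mk' N)) = A.relIndex B := by
  have hNB : N ≤ B := hNA.trans hAB
  have e1 := relindex_card_eq hAB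
  have e2 := relindex_card_eq (Subgroup.map_mono (f := QuotientGroup.mk' N) hAB)
  have e3 := card_map_mk' N hNA
  have e4 := card_map_mk' N hNB
  have hposA : 0 < Nat.card ↥(A.map (QuotientGroup.mk' N)) := Nat.card_pos
  have hposN : 0 < Nat.card ↥N := Nat.card_pos
  -- combine
  have e5 : Nat.card ↥(A.map (QuotientGroup.mk' N)) * Nat.card ↥N * A.relIndex B
      = Nat.card ↥(B.map (QuotientGroup.mk' N)) * Nat.card ↥N := by
    rw [e3, e4]
    exact e1
  have e6 : Nat.card ↥(A.map (QuotientGroup.mk' N)) * Nat.card ↥N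
        * ((A.map (QuotientGroup.mk' N)).relIndex (B.map (QuotientGroup.mk' N)))
      = Nat.card ↥(B.map (QuotientGroup.mk' N)) * Nat.card ↥N := by
    rw [mul_right_comm, e2]
  exact Nat.eq_of_mul_eq_mul_left (by positivity) (e6.trans e5.symm)

lemma map_inf_mk' {G : Type*} [Group G] (N : Subgroup G) [N.Normal] {C B : Subgroup G}
    (hNB : N ≤ B) :
    (C.map (QuotientGroup.mk' N)) ⊓ (B.map (QuotientGroup.mk' N))
      = (C ⊓ B).map (QuotientGroup.mk' N) := by
  apply le_antisymm
  · rintro x ⟨hx1, hx2⟩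
    obtain ⟨c, hc, rfl⟩ := hx1
    obtain ⟨b, hb, hcb⟩ := hx2
    obtain ⟨z, hz, hzeq⟩ := (QuotientGroup.mk'_eq_mk' N).mp hcb.symm
    have hcB : c ∈ B := by
      have : c = b * z⁻¹ := by rw [← hzeq]; group
      rw [this]
      exact B.mul_mem hb (B.inv_mem (hNB hz))
    exact ⟨c, ⟨hc, hcB⟩, rfl⟩
  · exact le_inf (Subgroup.map_mono inf_le_left) (Subgroup.map_mono inf_le_right)

lemma aux {p : ℕ} (hp : p.Prime) :
    ∀ (n : ℕ) (G : Type) [Group G] [Finite G] (s : ℕ), SectionalRankLe p G s →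
      ∀ (σ : Fin (n + 1) → Subgroup G), StrictMono σ → σ 0 = ⊥ →
        (∀ i, (σ i).Normal) →
        Nat.card {i : Fin n //
          (∃ m : ℕ, (σ i.castSucc).relIndex (σ i.succ) = p ^ m) ∧
          (∃ C : Subgroup G, σ i.castSucc ≤ C ∧ C ⊓ σ i.succ = σ i.castSucc ∧
            C ⊔ σ i.succ = ⊤)} ≤ s := by
  haveI : Fact p.Prime := ⟨hp⟩
  intro n
  induction n with
  | zero =>
    intro G _ _ s _ σ _ _ _
    haveI : IsEmpty {i : Fin 0 //
        (∃ m : ℕ, (σ i.castSucc).relIndex (σ i.succ) = p ^ m) ∧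
        (∃ C : Subgroup G, σ i.castSucc ≤ C ∧ C ⊓ σ i.succ = σ i.castSucc ∧
          C ⊔ σ i.succ = ⊤)} := ⟨fun x => x.1.elim0⟩
    rw [Nat.card_of_isEmpty]
    exact Nat.zero_le s
  | succ n ih =>
    intro G _ _ s hs σ hmono h0 hnorm
    haveI : (σ 1).Normal := hnorm 1
    set N : Subgroup G := σ 1 with hNdef
    haveI hNnormal : N.Normal := hnorm 1
    set φ : G →* G ⧸ N := QuotientGroup.mk' N with hφdef
    have hφs : Function.Surjective φ := QuotientGroup.mk'_surjective N
    have hNle : ∀ j : Fin (n + 1), N ≤ σ j.succ := by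
      intro j
      apply hmono.monotone
      rw [Fin.le_def]
      simp
    set σ' : Fin (n + 1) → Subgroup (G ⧸ N) := fun j => (σ j.succ).map φ with hσ'def
    have hmono' : StrictMono σ' := by
      intro j k hjk
      have hlt : σ j.succ < σ k.succ := hmono (Fin.succ_lt_succ_iff.mpr hjk)
      refine lt_of_le_of_ne (Subgroup.map_mono hlt.le) ?_
      intro heq
      have h2 := congrArg (Subgroup.comap φ) heq
      rw [Subgroup.comap_map_eq, Subgroup.comap_map_eq] at h2
      have hker : φ.ker = N := QuotientGroup.ker_mk' N
      rw [hker, sup_eq_left.mpr (hNle j), sup_eq_left.mpr (hNle k)] at h2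
      exact hlt.ne h2
    have h0' : σ' 0 = ⊥ := by
      rw [hσ'def]
      simp only
      rw [Fin.succ_zero_eq_one]
      rw [eq_bot_iff]
      rintro x ⟨y, hy, rfl⟩
      rw [Subgroup.mem_bot]
      exact (QuotientGroup.eq_one_iff y).mpr hy
    have hnorm' : ∀ j, (σ' j).Normal := fun j => (hnorm _).map φ hφs
    have htrans : ∀ j : Fin n,
        ((∃ m : ℕ, (σ (j.succ).castSucc).relIndex (σ (j.succ).succ) = p ^ m) ∧
         (∃ C : Subgroup G, σ (j.succ).castSucc ≤ C ∧
            C ⊓ σ (j.succ).succ = σ (j.succ).castSucc ∧ C ⊔ σ (j.succ).succ = ⊤)) →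
        ((∃ m : ℕ, (σ' j.castSucc).relIndex (σ' j.succ) = p ^ m) ∧
         (∃ C' : Subgroup (G ⧸ N), σ' j.castSucc ≤ C' ∧
            C' ⊓ σ' j.succ = σ' j.castSucc ∧ C' ⊔ σ' j.succ = ⊤)) := by
      rintro j ⟨⟨m, hm⟩, ⟨C, hC1, hC2, hC3⟩⟩
      have hAeq : σ (j.succ).castSucc = σ (j.castSucc).succ := by rw [Fin.succ_castSucc]
      rw [hAeq] at hm hC1 hC2
      have hNA : N ≤ σ (j.castSucc).succ := hNle _
      have hNB : N ≤ σ (j.succ).succ := hNle _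
      have hAB : σ (j.castSucc).succ ≤ σ (j.succ).succ := by
        apply hmono.monotone
        rw [Fin.succ_le_succ_iff]
        exact (Fin.castSucc_lt_succ : j.castSucc < j.succ).le
      constructor
      · refine ⟨m, ?_⟩
        simp only [hσ'def]
        rw [hφdef, relindex_map_mk' N hNA hAB]
        exact hm
      · refine ⟨C.map φ, ?_, ?_, ?_⟩
        · simp only [hσ'def]
          exact Subgroup.map_mono hC1
        · simp only [hσ'def]
          rw [hφdef, map_inf_mk' N hNB, hC2]
        · simp only [hσ'def]
          rw [hφdef, ← Subgroup.map_sup, hC3]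
          exact Subgroup.map_top_of_surjective _ hφs
    classical
    by_cases h0c : (∃ m : ℕ, (σ (0 : Fin (n+1)).castSucc).relIndex (σ (0 : Fin (n+1)).succ)
          = p ^ m) ∧
        (∃ C : Subgroup G, σ (0 : Fin (n+1)).castSucc ≤ C ∧
          C ⊓ σ (0 : Fin (n+1)).succ = σ (0 : Fin (n+1)).castSucc ∧
          C ⊔ σ (0 : Fin (n+1)).succ = ⊤)
    · -- the bottom factor is a complemented p-chief factor: the rank drops
      obtain ⟨⟨m, hm⟩, ⟨C, hC1, hC2, hC3⟩⟩ := h0c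
      simp only [Fin.castSucc_zero, Fin.succ_zero_eq_one, h0] at hm hC2 hC3
      rw [Subgroup.relIndex_bot_left] at hm
      have hNp : IsPGroup p ↥N := IsPGroup.iff_card.mpr ⟨m, hm⟩
      have hNbot : N ≠ ⊥ := by
        have hlt : σ 0 < σ 1 := by
          apply hmono
          rw [Fin.lt_def]
          simp
        rw [h0] at hlt
        exact (bot_lt_iff_ne_bot.mp hlt)
      obtain ⟨hs1, hq⟩ := rank_drop hp hs hNnormal hNp hNbot hC2 hC3
      have ihcard := ih (G ⧸ N) (s - 1) hq σ' hmono' h0' hnorm'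
      -- inject the counted indices into `Option` of counted indices of the quotient series
      set T₁ := {i : Fin (n+1) //
          (∃ m : ℕ, (σ i.castSucc).relIndex (σ i.succ) = p ^ m) ∧
          (∃ C : Subgroup G, σ i.castSucc ≤ C ∧ C ⊓ σ i.succ = σ i.castSucc ∧
            C ⊔ σ i.succ = ⊤)} with hT₁
      set T₂ := {j : Fin n //
          (∃ m : ℕ, (σ' j.castSucc).relIndex (σ' j.succ) = p ^ m) ∧
          (∃ C' : Subgroup (G ⧸ N), σ' j.castSucc ≤ C' ∧ C' ⊓ σ' j.succ = σ' j.castSucc ∧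
            C' ⊔ σ' j.succ = ⊤)} with hT₂
      have hstep : ∀ (i : Fin (n+1)) (hne : i ≠ 0),
          ((∃ m : ℕ, (σ i.castSucc).relIndex (σ i.succ) = p ^ m) ∧
          (∃ C : Subgroup G, σ i.castSucc ≤ C ∧ C ⊓ σ i.succ = σ i.castSucc ∧
            C ⊔ σ i.succ = ⊤)) →
          ((∃ m : ℕ, (σ' (i.pred hne).castSucc).relIndex (σ' (i.pred hne).succ) = p ^ m) ∧
          (∃ C' : Subgroup (G ⧸ N), σ' (i.pred hne).castSucc ≤ C' ∧
            C' ⊓ σ' (i.pred hne).succ = σ' (i.pred hne).castSucc ∧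
            C' ⊔ σ' (i.pred hne).succ = ⊤)) := by
        intro i hne hi
        apply htrans (i.pred hne)
        rw [Fin.succ_pred]
        exact hi
      let F : T₁ → Option T₂ := fun x =>
        if hne : x.1 = 0 then none else some ⟨x.1.pred hne, hstep x.1 hne x.2⟩
      have hFinj : Function.Injective F := by
        rintro ⟨x, hx⟩ ⟨y, hy⟩ hxy
        by_cases h1 : x = 0 <;> by_cases h2 : y = 0
        · exact Subtype.ext (h1.trans h2.symm)
        · simp only [F, dif_pos h1, dif_neg h2] at hxy
          exact (Option.some_ne_none _ hxy.symm).elim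
        · simp only [F, dif_pos h2, dif_neg h1] at hxy
          exact (Option.some_ne_none _ hxy).elim
        · simp only [F, dif_neg h1, dif_neg h2] at hxy
          have h3 : x.pred h1 = y.pred h2 := congrArg Subtype.val (Option.some.inj hxy)
          have h4 := congrArg Fin.succ h3
          rw [Fin.succ_pred, Fin.succ_pred] at h4
          exact Subtype.ext h4
      have hle := Nat.card_le_card_of_injective F hFinj
      rw [Finite.card_option] at hle
      have : Nat.card T₂ ≤ s - 1 := ihcard
      omega
    · -- the bottom factor is not counted
      have hq := rank_quotient N hs
      have ihcard := ih (G ⧸ N) s hq σ' hmono' h0' hnorm'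
      set T₁ := {i : Fin (n+1) //
          (∃ m : ℕ, (σ i.castSucc).relIndex (σ i.succ) = p ^ m) ∧
          (∃ C : Subgroup G, σ i.castSucc ≤ C ∧ C ⊓ σ i.succ = σ i.castSucc ∧
            C ⊔ σ i.succ = ⊤)} with hT₁
      set T₂ := {j : Fin n //
          (∃ m : ℕ, (σ' j.castSucc).relIndex (σ' j.succ) = p ^ m) ∧
          (∃ C' : Subgroup (G ⧸ N), σ' j.castSucc ≤ C' ∧ C' ⊓ σ' j.succ = σ' j.castSucc ∧
            C' ⊔ σ' j.succ = ⊤)} with hT₂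
      have hstep : ∀ (i : Fin (n+1)) (hne : i ≠ 0),
          ((∃ m : ℕ, (σ i.castSucc).relIndex (σ i.succ) = p ^ m) ∧
          (∃ C : Subgroup G, σ i.castSucc ≤ C ∧ C ⊓ σ i.succ = σ i.castSucc ∧
            C ⊔ σ i.succ = ⊤)) →
          ((∃ m : ℕ, (σ' (i.pred hne).castSucc).relIndex (σ' (i.pred hne).succ) = p ^ m) ∧
          (∃ C' : Subgroup (G ⧸ N), σ' (i.pred hne).castSucc ≤ C' ∧
            C' ⊓ σ' (i.pred hne).succ = σ' (i.pred hne).castSucc ∧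
            C' ⊔ σ' (i.pred hne).succ = ⊤)) := by
        intro i hne hi
        apply htrans (i.pred hne)
        rw [Fin.succ_pred]
        exact hi
      have hne0 : ∀ x : T₁, x.1 ≠ 0 := by
        rintro ⟨x, hx⟩ rfl
        exact h0c hx
      let F : T₁ → T₂ := fun x => ⟨x.1.pred (hne0 x), hstep x.1 (hne0 x) x.2⟩
      have hFinj : Function.Injective F := by
        rintro x y hxy
        apply Subtype.ext
        have h3 : x.1.pred (hne0 x) = y.1.pred (hne0 y) := congrArg Subtype.val hxy
        have h4 := congrArg Fin.succ h3
        rwa [Fin.succ_pred, Fin.succ_pred] at h4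
      have hle := Nat.card_le_card_of_injective F hFinj
      have : Nat.card T₂ ≤ s := ihcard
      omega

/-- For every natural number `s` there exists a constant `D = D(s)`, independent of the
prime `p`, such that: for every prime `p`, every finite group `G` of sectional `p`-rank at
most `s`, and every chief series `⊥ = σ 0 ≤ σ 1 ≤ ⋯ ≤ σ n = ⊤` of `G` (each `σ i` normal in
`G`, with no normal subgroup of `G` strictly between consecutive terms), the number of
indices `i` such that the chief factor `σ (i+1) / σ i` is a `p`-group (its order, the
relative index, is a power of `p`) and is complemented in `G / σ i` is at most `D`. -/
theorem card_split_p_chief_factors_le (s : ℕ) :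
    ∃ D : ℕ, ∀ (p : ℕ), p.Prime →
      ∀ (G : Type) [Group G] [Finite G], SectionalRankLe p G s →
      ∀ (n : ℕ) (σ : Fin (n + 1) → Subgroup G), StrictMono σ →
        σ 0 = ⊥ → σ (Fin.last n) = ⊤ →
        (∀ i, (σ i).Normal) →
        (∀ i : Fin n, ∀ H : Subgroup G, H.Normal →
            ¬ (σ i.castSucc < H ∧ H < σ i.succ)) →
        Nat.card {i : Fin n //
          (∃ m : ℕ, (σ i.castSucc).relIndex (σ i.succ) = p ^ m) ∧
          (∃ C : Subgroup G, σ i.castSucc ≤ C ∧ C ⊓ σ i.succ = σ i.castSucc ∧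
            C ⊔ σ i.succ = ⊤)} ≤ D := by
  refine ⟨s, ?_⟩
  intro p hp G _ _ hrank n σ hmono h0 _ hnorm _
  exact aux hp n G s hrank σ hmono h0 hnorm
end

section
/- Let G be a finite group generated by two subgroups H_1 and H_2, let A = H_1 ∩ H_2, let k be a field, and let V be a finite-dimensional kG-module. If H^1(H_1, V) = 0 and H^1(H_2, V) = 0 (cohomology of the restricted modules), then dim_k H^1(G,V) ≤ dim_k V^A, where V^A is the space of A-fixed vectors. -/
open groupCohomology

section aux
variable {G : Type} [Group G] {k V : Type} [Field k] [AddCommGroup V] [Module k V]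
  (ρ : Representation k G V)

lemma restrict_mem_cocycles₁ (H : Subgroup G) {f : G → V}
    (hf : f ∈ cocycles₁ (Rep.of ρ)) :
    (fun h : H => f h) ∈ cocycles₁ (Rep.of (ρ.comp H.subtype)) := by
  rw [mem_cocycles₁_iff]
  intro g h
  exact (mem_cocycles₁_iff (A := Rep.of ρ) f).1 hf g h

lemma exists_of_subsingleton {B : Rep k G} (hs : Subsingleton (groupCohomology B 1))
    {f : G → B} (hf : f ∈ cocycles₁ B) : ∃ x : B, ∀ g : G, B.ρ g x - x = f g := by
  haveI : Subsingleton (H1 B) := hs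
  have : f ∈ coboundaries₁ B := by
    have := Subsingleton.elim (H1π B ⟨f, hf⟩) 0
    exact (H1π_eq_zero_iff _).1 this
  obtain ⟨x, hx⟩ := this
  exact ⟨x, fun g => congrFun hx g⟩

end aux


/-- Let `G` be a finite group generated by subgroups `H₁` and `H₂`, with `A = H₁ ⊓ H₂`,
`k` a field and `V` a finite-dimensional `kG`-module. If `H¹(H₁,V) = 0` and
`H¹(H₂,V) = 0`, then `dim H¹(G,V) ≤ dim V^A`. -/
theorem dim_H1_le_dim_fixedPoints_of_generating (G : Type) [Group G] [Finite G]
    (H₁ H₂ : Subgroup G) (hgen : H₁ ⊔ H₂ = ⊤)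
    (k V : Type) [Field k] [AddCommGroup V] [Module k V] [FiniteDimensional k V]
    (ρ : Representation k G V)
    (h1 : Subsingleton (groupCohomology (Rep.of (ρ.comp H₁.subtype)) 1))
    (h2 : Subsingleton (groupCohomology (Rep.of (ρ.comp H₂.subtype)) 1)) :
    Module.finrank k (groupCohomology (Rep.of ρ) 1)
      ≤ Module.finrank k (Representation.invariants (ρ.comp (H₁ ⊓ H₂).subtype)) := by
  classical
  -- the submodule of pairs (f, w) : cocycle vanishing on H₁, coboundary of w on H₂
  set W : Submodule k ((G → V) × V) :=
    { carrier := {x | x.1 ∈ cocycles₁ (Rep.of ρ) ∧ (∀ h ∈ H₁, x.1 h = 0) ∧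
        ∀ h ∈ H₂, x.1 h = ρ h x.2 - x.2}
      add_mem' := by
        rintro a b ⟨ha1, ha2, ha3⟩ ⟨hb1, hb2, hb3⟩
        refine ⟨Submodule.add_mem _ ha1 hb1, fun h hh => ?_, fun h hh => ?_⟩
        · simp [ha2 h hh, hb2 h hh]
        · simp only [Prod.fst_add, Pi.add_apply, ha3 h hh, hb3 h hh, Prod.snd_add, map_add]
          abel
      zero_mem' := ⟨Submodule.zero_mem _, fun _ _ => rfl, fun h _ => by simp⟩
      smul_mem' := by
        rintro c a ⟨ha1, ha2, ha3⟩
        refine ⟨Submodule.smul_mem _ c ha1, fun h hh => ?_, fun h hh => ?_⟩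
        · simp [ha2 h hh]
        · simp only [Prod.smul_fst, Pi.smul_apply, ha3 h hh, Prod.smul_snd, map_smul,
            smul_sub] } with hW
  -- the injection into the invariants
  set φ : W →ₗ[k] (Representation.invariants (ρ.comp (H₁ ⊓ H₂).subtype)) :=
    LinearMap.codRestrict _ ((LinearMap.snd k (G → V) V).comp W.subtype) (by
      rintro ⟨⟨f, w⟩, hf1, hf2, hf3⟩
      rw [Representation.mem_invariants]
      rintro ⟨a, ha⟩
      show ρ a w = w
      have h3 := hf3 a ha.2
      rw [hf2 a ha.1] at h3
      exact sub_eq_zero.mp h3.symm) with hφ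
  have hφinj : Function.Injective φ := by
    rw [← LinearMap.ker_eq_bot]
    rw [Submodule.eq_bot_iff]
    rintro ⟨⟨f, w⟩, hf1, hf2, hf3⟩ hx
    have hw : w = 0 := congrArg Subtype.val hx
    subst hw
    -- the vanishing set of f is a subgroup containing H₁ and H₂
    have hf0 : ∀ g : G, f g = 0 := by
      have hone : f (1 : G) = 0 := by
        have h := (mem_cocycles₁_iff (A := Rep.of ρ) f).1 hf1 1 1
        simp only [one_mul, map_one, Module.End.one_apply] at h
        exact left_eq_add.mp h
      set S : Subgroup G :=
        { carrier := {g | f g = 0}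
          one_mem' := hone
          mul_mem' := by
            intro a b ha hb
            have := (mem_cocycles₁_iff (A := Rep.of ρ) f).1 hf1 a b
            simp only [Set.mem_setOf_eq] at ha hb ⊢
            rw [this, ha, hb, map_zero, add_zero]
          inv_mem' := by
            intro a ha
            simp only [Set.mem_setOf_eq] at ha ⊢
            have h1' := (mem_cocycles₁_iff (A := Rep.of ρ) f).1 hf1 a⁻¹ a
            rw [inv_mul_cancel, hone, ha, map_zero, zero_add] at h1'
            exact h1'.symm }
      have hS : H₁ ⊔ H₂ ≤ S := sup_le (fun g hg => hf2 g hg)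
        (fun g hg => by simpa [S] using (hf3 g hg))
      intro g
      exact (hgen ▸ hS) (Subgroup.mem_top g)
    have : f = 0 := funext hf0
    subst this
    rfl
  -- the surjection onto H1
  set ψ : W →ₗ[k] H1 (Rep.of ρ) := (H1π (Rep.of ρ)).hom.comp
    (LinearMap.codRestrict (cocycles₁ (Rep.of ρ))
      ((LinearMap.fst k (G → V) V).comp W.subtype) (fun x => x.2.1)) with hψ
  have hψsurj : Function.Surjective ψ := by
    intro c
    obtain ⟨f, rfl⟩ := (ModuleCat.epi_iff_surjective (H1π (Rep.of ρ))).1 inferInstance c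
    -- kill f on H₁
    obtain ⟨v, hv⟩ := exists_of_subsingleton h1 (restrict_mem_cocycles₁ ρ H₁ f.2)
    set b : cocycles₁ (Rep.of ρ) := ⟨(d₀₁ (Rep.of ρ)).hom v, d₀₁_apply_mem_cocycles₁ (A := Rep.of ρ) v⟩ with hb
    have hbmem : (b : G → V) ∈ coboundaries₁ (Rep.of ρ) := ⟨v, rfl⟩
    set g : cocycles₁ (Rep.of ρ) := f - b with hg
    have hgH1 : ∀ h ∈ H₁, (g : G → V) h = 0 := by
      intro h hh
      have hv' : (d₀₁ (Rep.of ρ)).hom v h = f h := hv ⟨h, hh⟩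
      show f h - (d₀₁ (Rep.of ρ)).hom v h = 0
      rw [hv', sub_self]
    obtain ⟨w, hw⟩ := exists_of_subsingleton h2
      (restrict_mem_cocycles₁ ρ H₂ g.2)
    refine ⟨⟨((g : G → V), w), g.2, hgH1, fun h hh => (hw ⟨h, hh⟩).symm⟩, ?_⟩
    show H1π (Rep.of ρ) g = H1π (Rep.of ρ) f
    rw [hg, map_sub]
    have : H1π (Rep.of ρ) b = 0 := (H1π_eq_zero_iff _).2 hbmem
    rw [this, sub_zero]
  -- put everything together
  haveI : FiniteDimensional k W := FiniteDimensional.of_injective φ hφinj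
  have e1 : Module.finrank k (groupCohomology (Rep.of ρ) 1)
      = Module.finrank k (H1 (Rep.of ρ)) :=
    rfl
  have le1 : Module.finrank k (H1 (Rep.of ρ)) ≤ Module.finrank k W :=
    Module.finrank_le_finrank_of_rank_le_rank
      (Cardinal.lift_le.mpr (ψ.rank_le_of_surjective hψsurj)) (Module.rank_lt_aleph0 k W)
  have le2 : Module.finrank k W
      ≤ Module.finrank k (Representation.invariants (ρ.comp (H₁ ⊓ H₂).subtype)) :=
    LinearMap.finrank_le_finrank_of_injective hφinj
  omega
end
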